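/- arXiv:1211.2607 — 4 statements merged into one kernel-verified Lean document; each statement's English description precedes it below -/
import Mathlib

section
/- Let H be a Hilbert space with inner product <.,.>_R, let C be a bounded self-adjoint nonnegative operator on H, and let (omega_k) be a sequence in H with <C omega_j, omega_k>_{L2} = delta_{jk} (orthonormality with respect to the C-form) and <omega_j, omega_k>_R = delta_{jk}/nu_k. If f = sum_k f_k omega_k with f_k = nu_k <f, omega_k>_R and the series converges absolutely, then <Cf, f>_{L2} = sum_k f_k^2 and ||f||_R^2 - <Cf,f>_{L2} = sum_k gamma_k^{-1} f_k^2 where gamma_k = (nu_k^{-1} - 1)^{-1}. -/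
open scoped InnerProductSpace

theorem stmt_5 {H : Type*} [NormedAddCommGroup H] [InnerProductSpace ℝ H] [CompleteSpace H]
    (C : H →L[ℝ] H) (hC : IsSelfAdjoint C) (hCnn : ∀ f : H, 0 ≤ ⟪C f, f⟫_ℝ)
    (ν : ℕ → ℝ) (hν : ∀ k, 0 < ν k) (ω : ℕ → H)
    (hCorth : ∀ j k, ⟪C (ω j), ω k⟫_ℝ = if j = k then 1 else 0)
    (hRorth : ∀ j k, ⟪ω j, ω k⟫_ℝ = if j = k then (ν k)⁻¹ else 0)
    (f : H)
    (habs : Summable fun k => ‖(ν k * ⟪f, ω k⟫_ℝ) • ω k‖)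
    (hexp : HasSum (fun k => (ν k * ⟪f, ω k⟫_ℝ) • ω k) f) :
    HasSum (fun k => (ν k * ⟪f, ω k⟫_ℝ) ^ 2) ⟪C f, f⟫_ℝ ∧
    HasSum (fun k => ((ν k)⁻¹ - 1) * (ν k * ⟪f, ω k⟫_ℝ) ^ 2) (‖f‖^2 - ⟪C f, f⟫_ℝ) := by
  set c : ℕ → ℝ := fun k => ν k * ⟪f, ω k⟫_ℝ with hc
  -- general expansion lemma
  have key : ∀ x : H, HasSum (fun k => c k * ⟪x, ω k⟫_ℝ) ⟪x, f⟫_ℝ := by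
    intro x
    have := hexp.mapL (innerSL ℝ x)
    simpa [hc, mul_comm] using this
  -- ⟪C f, ω k⟫ = c k
  have hCfw : ∀ k, ⟪C f, ω k⟫_ℝ = c k := by
    intro k
    have h1 : ⟪C f, ω k⟫_ℝ = ⟪C (ω k), f⟫_ℝ := by
      rw [real_inner_comm]
      exact (hC.isSymmetric (ω k) f).symm
    have h2 := key (C (ω k))
    have h3 : (fun j => c j * ⟪C (ω k), ω j⟫_ℝ) = fun j => if j = k then c k else 0 := by
      funext j
      rw [hCorth k j]
      by_cases h : j = k <;> simp [h]
      intro h'; exact absurd h'.symm h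
    rw [h3] at h2
    have h4 : HasSum (fun j => if j = k then c k else 0) (c k) := hasSum_ite_eq k (c k)
    rw [h1]
    exact h2.unique h4
  have hCf : HasSum (fun k => c k ^ 2) ⟪C f, f⟫_ℝ := by
    have h2 := key (C f)
    have h3 : (fun k => c k * ⟪C f, ω k⟫_ℝ) = fun k => c k ^ 2 := by
      funext k; rw [hCfw k]; ring
    rwa [h3] at h2
  refine ⟨hCf, ?_⟩
  have hNf : HasSum (fun k => (ν k)⁻¹ * c k ^ 2) (‖f‖ ^ 2) := by
    have h2 := key f
    have h3 : (fun k => c k * ⟪f, ω k⟫_ℝ) = fun k => (ν k)⁻¹ * c k ^ 2 := by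
      funext k
      have : ⟪f, ω k⟫_ℝ = (ν k)⁻¹ * c k := by
        rw [hc, inv_mul_cancel_left₀ (hν k).ne']
      rw [this]; ring
    rw [h3] at h2
    rwa [real_inner_self_eq_norm_sq] at h2
  have := hNf.sub hCf
  convert this using 3 with k
  · rfl
  · rw [hc]; ring
end

section
/- Let gamma_k = c * k^{-2p} for constants c > 0 and p > 1/2, and let 0 <= a <= 1. Then for lambda > 0 small, sum_{k=1}^infinity (1 + gamma_k^{-a}) / (1 + lambda gamma_k^{-1})^2 is bounded above and below by constant multiples of lambda^{-(a + 1/(2p))}. -/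
open Real

-- MVT step
lemma stepA {s : ℝ} (hs : 1 < s) {x : ℝ} (hx : 1 ≤ x) :
    x ^ (-s) ≤ 2 ^ s / (s - 1) * (x ^ (1 - s) - (x + 1) ^ (1 - s)) := by
  have hx0 : (0:ℝ) < x := lt_of_lt_of_le one_pos hx
  obtain ⟨t, ht, hslope⟩ := exists_hasDerivAt_eq_slope (fun y => y ^ (1 - s))
    (fun y => (1 - s) * y ^ (1 - s - 1)) (by linarith : x < x + 1)
    (by
      apply ContinuousOn.rpow_const continuousOn_id
      intro y hy
      exact Or.inl (by simp only [id]; rcases hy with ⟨h1, _⟩; nlinarith))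
    (fun y hy => Real.hasDerivAt_rpow_const (Or.inl (by rcases hy with ⟨h1, _⟩; nlinarith)))
  have ht1 : x < t := ht.1
  have ht2 : t < x + 1 := ht.2
  have ht0 : 0 < t := lt_trans hx0 ht1
  have hss : (1 : ℝ) - s - 1 = -s := by ring
  rw [hss] at hslope
  simp only [add_sub_cancel_left, div_one] at hslope
  -- hslope : (1 - s) * t ^ (-s) = (x+1)^(1-s) - x^(1-s)
  have hkey : x ^ (1 - s) - (x + 1) ^ (1 - s) = (s - 1) * t ^ (-s) := by
    have := hslope
    nlinarith [this]
  rw [hkey]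
  have h2x : t ≤ 2 * x := by linarith
  have h1 : (2 * x) ^ (-s) ≤ t ^ (-s) :=
    Real.rpow_le_rpow_of_nonpos ht0 h2x (by linarith)
  have h2 : (2 * x) ^ (-s) = 2 ^ (-s) * x ^ (-s) :=
    Real.mul_rpow (by norm_num) (le_of_lt hx0)
  have h3 : 2 ^ (-s) * x ^ (-s) ≤ t ^ (-s) := h2 ▸ h1
  have hs1 : (0:ℝ) < s - 1 := by linarith
  have h2s : (0:ℝ) < (2:ℝ) ^ s := Real.rpow_pos_of_pos two_pos s
  have h2ns : (2:ℝ) ^ (-s) = ((2:ℝ) ^ s)⁻¹ := by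
    rw [Real.rpow_neg (by norm_num)]
  rw [div_mul_eq_mul_div, le_div_iff₀ hs1]
  calc x ^ (-s) * (s - 1) = 2 ^ s * (2 ^ (-s) * x ^ (-s)) * (s-1) := by
        rw [h2ns]; field_simp
    _ ≤ 2 ^ s * t ^ (-s) * (s - 1) := by
        have := mul_le_mul_of_nonneg_left h3 (le_of_lt h2s)
        nlinarith
    _ = 2 ^ s * ((s - 1) * t ^ (-s)) := by ring

lemma sumNat {s : ℝ} (hs : 1 < s) (M : ℕ) :
    Summable (fun k : ℕ => ((k + M : ℕ) : ℝ) ^ (-s)) := by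
  exact (summable_nat_add_iff (f := fun n : ℕ => (n:ℝ) ^ (-s)) M).2
    (Real.summable_nat_rpow.2 (by linarith))

lemma stepB {s : ℝ} (hs : 1 < s) {M : ℕ} (hM : 1 ≤ M) :
    (∑' k : ℕ, ((k + M : ℕ) : ℝ) ^ (-s)) ≤ 2 ^ s / (s - 1) * (M : ℝ) ^ (1 - s) := by
  set F : ℕ → ℝ := fun k => ((k + M : ℕ) : ℝ) ^ (1 - s) with hF
  have hFnn : ∀ k, 0 ≤ F k - F (k + 1) := by
    intro k
    have h1 : ((k + M : ℕ) : ℝ) ≤ ((k + 1 + M : ℕ) : ℝ) := by push_cast; linarith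
    have h0 : (0:ℝ) < ((k + M : ℕ) : ℝ) := by
      have : (1:ℕ) ≤ k + M := le_add_of_nonneg_of_le (Nat.zero_le k) hM
      exact_mod_cast Nat.lt_of_lt_of_le Nat.zero_lt_one this
    have := Real.rpow_le_rpow_of_nonpos h0 h1 (by linarith : (1:ℝ) - s ≤ 0)
    simpa [hF] using sub_nonneg.2 this
  have hF0 : Filter.Tendsto F Filter.atTop (nhds 0) := by
    have h1 : Filter.Tendsto (fun k : ℕ => ((k + M : ℕ) : ℝ)) Filter.atTop Filter.atTop := by
      apply Filter.tendsto_atTop_mono (fun k => by push_cast; linarith : ∀ k : ℕ, (k:ℝ) ≤ ((k + M : ℕ):ℝ))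
      exact tendsto_natCast_atTop_atTop
    have h2 := (tendsto_rpow_neg_atTop (by linarith : (0:ℝ) < s - 1)).comp h1
    simpa [hF, neg_sub, Function.comp_def] using h2
  have hHasSum : HasSum (fun k => F k - F (k + 1)) (F 0) := by
    rw [hasSum_iff_tendsto_nat_of_nonneg hFnn]
    have : ∀ n, ∑ i ∈ Finset.range n, (F i - F (i + 1)) = F 0 - F n :=
      fun n => Finset.sum_range_sub' F n
    simp only [this]
    simpa using (tendsto_const_nhds.sub hF0)
  have hterm : ∀ k : ℕ, ((k + M : ℕ) : ℝ) ^ (-s) ≤ 2 ^ s / (s - 1) * (F k - F (k + 1)) := by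
    intro k
    have hx : (1:ℝ) ≤ ((k + M : ℕ) : ℝ) := by
      have : (1:ℕ) ≤ k + M := le_add_of_nonneg_of_le (Nat.zero_le k) hM
      exact_mod_cast this
    have := stepA hs hx
    have hcast : ((k + 1 + M : ℕ) : ℝ) = ((k + M : ℕ) : ℝ) + 1 := by push_cast; ring
    have hgoal : ((k + M : ℕ) : ℝ) ^ (-s) ≤
        2 ^ s / (s - 1) * (((k + M : ℕ):ℝ) ^ (1 - s) - (((k + M : ℕ):ℝ) + 1) ^ (1 - s)) := this
    have h2 : F (k+1) = (((k + M : ℕ):ℝ) + 1) ^ (1 - s) := by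
      show ((k + 1 + M : ℕ):ℝ) ^ (1 - s) = _
      rw [hcast]
    rw [hF]
    simp only []
    rw [show ((k + 1 + M : ℕ):ℝ) = ((k + M : ℕ):ℝ) + 1 from hcast]
    exact hgoal
  have hsum2 : Summable (fun k => 2 ^ s / (s - 1) * (F k - F (k + 1))) :=
    (hHasSum.summable).mul_left _
  calc (∑' k : ℕ, ((k + M : ℕ) : ℝ) ^ (-s))
      ≤ ∑' k, 2 ^ s / (s - 1) * (F k - F (k + 1)) := Summable.tsum_le_tsum hterm (sumNat hs M) hsum2
    _ = 2 ^ s / (s - 1) * (F 0) := by rw [tsum_mul_left, hHasSum.tsum_eq]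
    _ = 2 ^ s / (s - 1) * (M : ℝ) ^ (1 - s) := by simp [hF]

-- termwise upper bound
lemma ubound {q b μ : ℝ} {w : ℝ} (hw : 1 ≤ w) (hμ : 0 < μ) :
    w ^ b / (1 + μ * w ^ q) ^ 2 ≤ μ⁻¹ * μ⁻¹ * w ^ (-(2 * q - b)) := by
  have hw0 : (0:ℝ) < w := lt_of_lt_of_le one_pos hw
  have hwq : (0:ℝ) < w ^ q := Real.rpow_pos_of_pos hw0 q
  have hd0 : (0:ℝ) < (μ * w ^ q) ^ 2 := by positivity
  have hdle : (μ * w ^ q) ^ 2 ≤ (1 + μ * w ^ q) ^ 2 := by nlinarith [mul_pos hμ hwq]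
  have h1 : w ^ b / (1 + μ * w ^ q) ^ 2 ≤ w ^ b / (μ * w ^ q) ^ 2 :=
    div_le_div_of_nonneg_left (by positivity) hd0 hdle
  refine h1.trans_eq ?_
  have h2 : (w ^ q) ^ 2 = w ^ (2 * q) := by
    rw [sq, ← Real.rpow_add hw0]; ring_nf
  have h3 : w ^ b / w ^ (2 * q) = w ^ (-(2 * q - b)) := by
    rw [← Real.rpow_sub hw0]; ring_nf
  rw [mul_pow, h2]
  rw [div_eq_mul_inv, mul_inv, ← mul_assoc]
  rw [mul_comm (w ^ b) ((μ^2)⁻¹), mul_assoc, ← div_eq_mul_inv (w ^ b), h3, sq, mul_inv]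

set_option maxHeartbeats 1000000 in
lemma coreC {q b : ℝ} (hq : 1 < q) (hb : 0 ≤ b) (hbq : b ≤ q) :
    ∃ A B μ0 : ℝ, 0 < A ∧ 0 < B ∧ 0 < μ0 ∧ ∀ μ : ℝ, 0 < μ → μ < μ0 →
      A * μ ^ (-((b+1)/q)) ≤ (∑' k : ℕ, ((k:ℝ)+1) ^ b / (1 + μ * ((k:ℝ)+1) ^ q) ^ 2) ∧
      (∑' k : ℕ, ((k:ℝ)+1) ^ b / (1 + μ * ((k:ℝ)+1) ^ q) ^ 2) ≤ B * μ ^ (-((b+1)/q)) := by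
  obtain ⟨s, hs_def⟩ : ∃ s : ℝ, s = 2 * q - b := ⟨_, rfl⟩
  have hs : 1 < s := by rw [hs_def]; linarith
  have hq0 : (0:ℝ) < q := by linarith
  refine ⟨(1/4) * (1/4:ℝ) ^ (b+1), 1 + 2 ^ s / (s - 1), (2:ℝ) ^ (-q), ?_, ?_, ?_, ?_⟩
  · positivity
  · have : (0:ℝ) < 2 ^ s / (s-1) := by
      apply div_pos (Real.rpow_pos_of_pos two_pos s); linarith
    linarith
  · positivity
  intro μ hμ hμ0
  obtain ⟨u, hu⟩ : ∃ u : ℕ → ℝ,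
      u = fun k : ℕ => ((k:ℝ)+1) ^ b / (1 + μ * ((k:ℝ)+1) ^ q) ^ 2 := ⟨_, rfl⟩
  rw [← hu]
  have huk : ∀ k : ℕ, u k = ((k:ℝ)+1) ^ b / (1 + μ * ((k:ℝ)+1) ^ q) ^ 2 := fun k => by
    rw [hu]
  have hunn : ∀ k, 0 ≤ u k := fun k => by
    rw [huk]
    have : (0:ℝ) < ((k:ℝ)+1) ^ q := Real.rpow_pos_of_pos (by positivity) q
    positivity
  have hwk : ∀ k : ℕ, (1:ℝ) ≤ (k:ℝ)+1 := fun k => by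
    have := Nat.cast_nonneg (α := ℝ) k; linarith
  -- x = μ^{-1/q}
  obtain ⟨x, hx_def⟩ : ∃ x : ℝ, x = μ ^ (-1/q : ℝ) := ⟨_, rfl⟩
  have hx0 : 0 < x := hx_def ▸ Real.rpow_pos_of_pos hμ _
  have hz : (-1/q : ℝ) < 0 := div_neg_of_neg_of_pos (by norm_num) hq0
  have hx2 : 2 < x := by
    have h1 : ((2:ℝ) ^ (-q)) ^ (-1/q : ℝ) = 2 := by
      rw [← Real.rpow_mul (by norm_num : (0:ℝ) ≤ 2)]
      rw [show (-q) * (-1/q) = 1 by field_simp, Real.rpow_one]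
    rw [hx_def]
    calc (2:ℝ) = ((2:ℝ) ^ (-q)) ^ (-1/q : ℝ) := h1.symm
      _ < μ ^ (-1/q : ℝ) :=
          (Real.rpow_lt_rpow_iff_of_neg (by positivity) hμ hz).2 hμ0
  have hxq : x ^ q = μ⁻¹ := by
    rw [hx_def, ← Real.rpow_mul hμ.le]
    rw [show (-1/q) * q = -1 by field_simp, Real.rpow_neg_one]
  have hxexp : x ^ (b+1) = μ ^ (-((b+1)/q)) := by
    rw [hx_def, ← Real.rpow_mul hμ.le]
    congr 1; field_simp
  have hx1s : x ^ (1-s) = μ ^ ((-1/q) * (1-s)) := by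
    rw [hx_def, ← Real.rpow_mul hμ.le]
  obtain ⟨N, hN_def⟩ : ∃ n : ℕ, n = ⌊x⌋₊ := ⟨_, rfl⟩
  have hN2 : 2 ≤ N := hN_def ▸ Nat.le_floor (by exact_mod_cast hx2.le)
  have hN1 : 1 ≤ N := le_trans (by norm_num) hN2
  have hNx : (N:ℝ) ≤ x := hN_def ▸ Nat.floor_le hx0.le
  have hxN1 : x < (N:ℝ) + 1 := hN_def ▸ Nat.lt_floor_add_one x
  have hNpos : (0:ℝ) < N := by exact_mod_cast Nat.lt_of_lt_of_le Nat.zero_lt_one hN1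
  have hx2N : x ≤ 2 * N := by
    have : (1:ℝ) ≤ N := by exact_mod_cast hN1
    linarith
  have hμNq : μ * (N:ℝ) ^ q ≤ 1 := by
    have h1 : (N:ℝ) ^ q ≤ x ^ q := Real.rpow_le_rpow hNpos.le hNx hq0.le
    calc μ * (N:ℝ) ^ q ≤ μ * x ^ q := by nlinarith
      _ = μ * μ⁻¹ := by rw [hxq]
      _ = 1 := mul_inv_cancel₀ (ne_of_gt hμ)
  -- summability
  have hub : ∀ k : ℕ, u k ≤ μ⁻¹ * μ⁻¹ * ((k:ℝ)+1) ^ (-s) := by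
    intro k
    rw [huk, show -s = -(2*q-b) by rw [hs_def]]
    exact ubound (hwk k) hμ
  have husum : Summable u := by
    apply Summable.of_nonneg_of_le hunn hub
    apply Summable.mul_left
    have h1 : Summable (fun k : ℕ => ((k + 1 : ℕ) : ℝ) ^ (-s)) := sumNat hs 1
    apply h1.congr
    intro k; push_cast; ring_nf
  constructor
  · -- LOWER BOUND
    have hsub : Finset.Ico (N/2) N ⊆ Finset.range N := by
      rw [Finset.range_eq_Ico]; exact Finset.Ico_subset_Ico (Nat.zero_le _) le_rfl
    have hterm : ∀ k ∈ Finset.Ico (N/2) N, (x/4) ^ b / 4 ≤ u k := by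
      intro k hk
      rw [Finset.mem_Ico] at hk
      rw [huk]
      have hwN : (k:ℝ) + 1 ≤ (N:ℝ) := by
        have : k + 1 ≤ N := hk.2
        exact_mod_cast this
      have hwx4 : x/4 ≤ (k:ℝ) + 1 := by
        have h1 : N ≤ 2*(N/2) + 1 := by omega
        have h2 : (N:ℝ) ≤ 2*((N/2:ℕ):ℝ) + 1 := by exact_mod_cast h1
        have h3 : ((N/2:ℕ):ℝ) ≤ (k:ℝ) := by exact_mod_cast hk.1
        nlinarith
      have hw0 : (0:ℝ) < (k:ℝ) + 1 := by positivity
      have h3 : 0 < ((k:ℝ)+1) ^ q := Real.rpow_pos_of_pos hw0 q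
      have hdle : (1 + μ * ((k:ℝ)+1) ^ q) ^ 2 ≤ 4 := by
        have h1 : ((k:ℝ)+1) ^ q ≤ (N:ℝ) ^ q := Real.rpow_le_rpow hw0.le hwN hq0.le
        have h2 : μ * ((k:ℝ)+1) ^ q ≤ 1 := le_trans (by nlinarith) hμNq
        nlinarith [mul_pos hμ h3]
      have hnum : (x/4) ^ b ≤ ((k:ℝ)+1) ^ b := Real.rpow_le_rpow (by positivity) hwx4 hb
      have hd0 : (0:ℝ) < (1 + μ * ((k:ℝ)+1) ^ q) ^ 2 := by nlinarith [mul_pos hμ h3]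
      calc (x/4) ^ b / 4 ≤ ((k:ℝ)+1) ^ b / 4 := by
            apply div_le_div_of_nonneg_right hnum; norm_num
        _ ≤ ((k:ℝ)+1) ^ b / (1 + μ * ((k:ℝ)+1) ^ q) ^ 2 :=
            div_le_div_of_nonneg_left (by positivity) hd0 hdle
    have hcard : (x/4) ≤ ((Finset.Ico (N/2) N).card : ℝ) := by
      rw [Nat.card_Ico]
      have h2 : (N:ℝ)/2 ≤ ((N - N/2 : ℕ):ℝ) := by
        have h1 : N ≤ 2*(N - N/2) := by omega
        have := (Nat.cast_le (α := ℝ)).2 h1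
        push_cast at this ⊢
        linarith
      linarith
    have hsum1 : ((Finset.Ico (N/2) N).card : ℝ) * ((x/4) ^ b / 4) ≤
        ∑ k ∈ Finset.Ico (N/2) N, u k := by
      have := Finset.card_nsmul_le_sum (Finset.Ico (N/2) N) u ((x/4) ^ b / 4) hterm
      simpa [nsmul_eq_mul] using this
    have hsum2 : ∑ k ∈ Finset.Ico (N/2) N, u k ≤ ∑ k ∈ Finset.range N, u k :=
      Finset.sum_le_sum_of_subset_of_nonneg hsub (fun i _ _ => hunn i)
    have hsum3 : ∑ k ∈ Finset.range N, u k ≤ ∑' k, u k :=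
      Summable.sum_le_tsum _ (fun i _ => hunn i) husum
    have hm0 : 0 ≤ (x/4) ^ b / 4 := by positivity
    have hfinal : (x/4) * ((x/4) ^ b / 4) ≤ ∑' k, u k := by
      have h4 : (x/4) * ((x/4) ^ b / 4) ≤ ((Finset.Ico (N/2) N).card : ℝ) * ((x/4) ^ b / 4) :=
        mul_le_mul_of_nonneg_right hcard hm0
      linarith
    refine le_trans (le_of_eq ?_) hfinal
    rw [← hxexp]
    have h5 : (x/4) ^ (b+1) = (x/4) ^ b * (x/4) := Real.rpow_add_one (by positivity) b
    have h6 : (x/4) ^ (b+1) = x ^ (b+1) * (1/4:ℝ) ^ (b+1) := by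
      rw [show x/4 = x * (1/4) by ring, Real.mul_rpow hx0.le (by norm_num)]
    nlinarith [h5, h6]
  · -- UPPER BOUND
    rw [← Summable.sum_add_tsum_nat_add N husum]
    have hhead : ∑ k ∈ Finset.range N, u k ≤ μ ^ (-((b+1)/q)) := by
      have hterm : ∀ k ∈ Finset.range N, u k ≤ x ^ b := by
        intro k hk
        rw [Finset.mem_range] at hk
        rw [huk]
        have hw0 : (0:ℝ) < (k:ℝ) + 1 := by positivity
        have hwx : (k:ℝ) + 1 ≤ x := by
          have : (k:ℝ) + 1 ≤ (N:ℝ) := by exact_mod_cast Nat.succ_le_of_lt hk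
          linarith
        have h3 : 0 < ((k:ℝ)+1) ^ q := Real.rpow_pos_of_pos hw0 q
        have hd1 : (1:ℝ) ≤ (1 + μ * ((k:ℝ)+1) ^ q) ^ 2 := by
          nlinarith [mul_pos hμ h3]
        calc ((k:ℝ)+1) ^ b / (1 + μ * ((k:ℝ)+1) ^ q) ^ 2
            ≤ ((k:ℝ)+1) ^ b / 1 := div_le_div_of_nonneg_left (by positivity) one_pos hd1
          _ = ((k:ℝ)+1) ^ b := div_one _
          _ ≤ x ^ b := Real.rpow_le_rpow hw0.le hwx hb
      calc ∑ k ∈ Finset.range N, u k ≤ (Finset.range N).card • x ^ b :=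
            Finset.sum_le_card_nsmul _ _ _ hterm
        _ = (N:ℝ) * x ^ b := by rw [Finset.card_range, nsmul_eq_mul]
        _ ≤ x * x ^ b := mul_le_mul_of_nonneg_right hNx (Real.rpow_nonneg hx0.le b)
        _ = x ^ (b+1) := by rw [Real.rpow_add_one (ne_of_gt hx0), mul_comm]
        _ = μ ^ (-((b+1)/q)) := hxexp
    have htail : (∑' k, u (k + N)) ≤ 2 ^ s / (s-1) * μ ^ (-((b+1)/q)) := by
      have hterm : ∀ k : ℕ, u (k + N) ≤ μ⁻¹ * μ⁻¹ * ((k + (N+1) : ℕ):ℝ) ^ (-s) := by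
        intro k
        rw [huk]
        have h1 := ubound (q := q) (b := b) (hwk (k + N)) hμ
        have hcast : (((k + N : ℕ) : ℝ)) + 1 = ((k + (N+1) : ℕ):ℝ) := by push_cast; ring
        calc (((k + N : ℕ):ℝ)+1) ^ b / (1 + μ * (((k + N : ℕ):ℝ)+1) ^ q) ^ 2
            ≤ μ⁻¹ * μ⁻¹ * (((k + N : ℕ):ℝ) + 1) ^ (-(2*q - b)) := h1
          _ = μ⁻¹ * μ⁻¹ * ((k + (N+1) : ℕ):ℝ) ^ (-s) := by rw [hcast, hs_def]
      have hsumr : Summable (fun k : ℕ => μ⁻¹ * μ⁻¹ * ((k + (N+1) : ℕ):ℝ) ^ (-s)) :=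
        (sumNat hs (N+1)).mul_left _
      have h2 : (∑' k, u (k + N)) ≤ ∑' k : ℕ, μ⁻¹ * μ⁻¹ * ((k + (N+1) : ℕ):ℝ) ^ (-s) :=
        Summable.tsum_le_tsum hterm ((summable_nat_add_iff N).2 husum) hsumr
      have h3 : (∑' k : ℕ, μ⁻¹ * μ⁻¹ * ((k + (N+1) : ℕ):ℝ) ^ (-s)) =
          μ⁻¹ * μ⁻¹ * ∑' k : ℕ, ((k + (N+1) : ℕ):ℝ) ^ (-s) := by
        rw [tsum_mul_left]
      have h4 : (∑' k : ℕ, ((k + (N+1) : ℕ):ℝ) ^ (-s)) ≤ 2 ^ s / (s-1) * ((N:ℝ)+1) ^ (1-s) := by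
        have := stepB hs (Nat.le_add_left 1 N)
        simpa using this
      have h5 : ((N:ℝ)+1) ^ (1-s) ≤ x ^ (1-s) :=
        Real.rpow_le_rpow_of_nonpos hx0 hxN1.le (by linarith)
      have hc0 : (0:ℝ) ≤ 2 ^ s / (s-1) := by
        apply div_nonneg (Real.rpow_nonneg (by norm_num) s); linarith
      have h6 : μ⁻¹ * μ⁻¹ * x ^ (1-s) = μ ^ (-((b+1)/q)) := by
        rw [hx1s, ← Real.rpow_neg_one μ, ← Real.rpow_add hμ, ← Real.rpow_add hμ]
        congr 1
        rw [hs_def]; field_simp; ring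
      calc (∑' k, u (k + N)) ≤ μ⁻¹ * μ⁻¹ * ∑' k : ℕ, ((k + (N+1) : ℕ):ℝ) ^ (-s) := by
            rw [← h3]; exact h2
        _ ≤ μ⁻¹ * μ⁻¹ * (2 ^ s / (s-1) * ((N:ℝ)+1) ^ (1-s)) := by
            apply mul_le_mul_of_nonneg_left h4; positivity
        _ = 2 ^ s / (s-1) * (μ⁻¹ * μ⁻¹ * ((N:ℝ)+1) ^ (1-s)) := by ring
        _ ≤ 2 ^ s / (s-1) * (μ⁻¹ * μ⁻¹ * x ^ (1-s)) := by
            apply mul_le_mul_of_nonneg_left _ hc0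
            apply mul_le_mul_of_nonneg_left h5 (by positivity)
        _ = 2 ^ s / (s-1) * μ ^ (-((b+1)/q)) := by rw [h6]
    have heq : (1 + 2 ^ s / (s-1)) * μ ^ (-((b+1)/q)) =
        μ ^ (-((b+1)/q)) + 2 ^ s / (s-1) * μ ^ (-((b+1)/q)) := by ring
    rw [heq]
    exact add_le_add hhead htail

lemma sumU {q b : ℝ} (hq : 1 < q) (hbq : b ≤ q) {μ : ℝ} (hμ : 0 < μ) :
    Summable (fun k : ℕ => ((k:ℝ)+1) ^ b / (1 + μ * ((k:ℝ)+1) ^ q) ^ 2) := by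
  have hs : 1 < 2 * q - b := by linarith
  have hwk : ∀ k : ℕ, (1:ℝ) ≤ (k:ℝ)+1 := fun k => by
    have := Nat.cast_nonneg (α := ℝ) k; linarith
  apply Summable.of_nonneg_of_le
    (fun k => by
      have : (0:ℝ) < ((k:ℝ)+1) ^ q := Real.rpow_pos_of_pos (by positivity) q
      positivity)
    (fun k => ubound (hwk k) hμ)
  apply Summable.mul_left
  have h1 : Summable (fun k : ℕ => ((k + 1 : ℕ) : ℝ) ^ (-(2 * q - b))) := sumNat hs 1
  apply h1.congr
  intro k; push_cast; ring_nf

theorem stmt_9 (c p : ℝ) (hc : 0 < c) (hp : 1/2 < p)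
    (a : ℝ) (ha0 : 0 ≤ a) (ha1 : a ≤ 1) :
    ∃ C1 C2 l0 : ℝ, 0 < C1 ∧ 0 < C2 ∧ 0 < l0 ∧
      ∀ l : ℝ, 0 < l → l < l0 →
        C1 * l ^ (-(a + 1 / (2 * p))) ≤
          (∑' k : ℕ, (1 + (c * ((k : ℝ) + 1) ^ (-(2 * p))) ^ (-a)) /
            (1 + l * (c * ((k : ℝ) + 1) ^ (-(2 * p)))⁻¹) ^ 2) ∧
        (∑' k : ℕ, (1 + (c * ((k : ℝ) + 1) ^ (-(2 * p))) ^ (-a)) /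
            (1 + l * (c * ((k : ℝ) + 1) ^ (-(2 * p)))⁻¹) ^ 2) ≤
          C2 * l ^ (-(a + 1 / (2 * p))) := by
  set q : ℝ := 2 * p with hq_def
  set b : ℝ := q * a with hb_def
  have hq : 1 < q := by rw [hq_def]; linarith
  have hq0 : (0:ℝ) < q := by linarith
  have hb : 0 ≤ b := mul_nonneg hq0.le ha0
  have hbq : b ≤ q := by
    rw [hb_def]; nlinarith
  obtain ⟨A, B, μ0, hA, hB, hμ0, hAB⟩ := coreC hq hb hbq
  have he : (b + 1) / q = a + 1 / (2 * p) := by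
    rw [hb_def, hq_def]; field_simp
  have hwk : ∀ k : ℕ, (1:ℝ) ≤ (k:ℝ)+1 := fun k => by
    have := Nat.cast_nonneg (α := ℝ) k; linarith
  have hca : (0:ℝ) < c ^ (-a) := Real.rpow_pos_of_pos hc _
  have hce : (0:ℝ) < c ^ ((b+1)/q) := Real.rpow_pos_of_pos hc _
  refine ⟨c ^ (-a) * A * c ^ ((b+1)/q), (1 + c ^ (-a)) * B * c ^ ((b+1)/q), c * μ0,
    by positivity, by positivity, by positivity, ?_⟩
  intro l hl hl0
  set μ : ℝ := l / c with hμ_def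
  have hμ : 0 < μ := div_pos hl hc
  have hμlt : μ < μ0 := (div_lt_iff₀ hc).2 (by rw [mul_comm]; exact hl0)
  obtain ⟨hlow, hhigh⟩ := hAB μ hμ hμlt
  -- rewrite terms
  have hrw : ∀ k : ℕ, (1 + (c * ((k : ℝ) + 1) ^ (-(2 * p))) ^ (-a)) /
      (1 + l * (c * ((k : ℝ) + 1) ^ (-(2 * p)))⁻¹) ^ 2 =
      (1 + c ^ (-a) * ((k:ℝ)+1) ^ b) / (1 + μ * ((k:ℝ)+1) ^ q) ^ 2 := by
    intro k
    have hw0 : (0:ℝ) < (k:ℝ)+1 := lt_of_lt_of_le one_pos (hwk k)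
    have h1 : (c * ((k : ℝ) + 1) ^ (-(2 * p))) ^ (-a) = c ^ (-a) * ((k:ℝ)+1) ^ b := by
      rw [Real.mul_rpow hc.le (Real.rpow_nonneg hw0.le _)]
      rw [← Real.rpow_mul hw0.le]
      rw [show (-(2*p)) * (-a) = b by rw [hb_def, hq_def]; ring]
    have h2 : l * (c * ((k : ℝ) + 1) ^ (-(2 * p)))⁻¹ = μ * ((k:ℝ)+1) ^ q := by
      rw [mul_inv, Real.rpow_neg hw0.le, inv_inv, hμ_def, hq_def]
      ring
    rw [h1, h2]
  rw [show (fun k : ℕ => (1 + (c * ((k : ℝ) + 1) ^ (-(2 * p))) ^ (-a)) /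
      (1 + l * (c * ((k : ℝ) + 1) ^ (-(2 * p)))⁻¹) ^ 2) =
      (fun k : ℕ => (1 + c ^ (-a) * ((k:ℝ)+1) ^ b) / (1 + μ * ((k:ℝ)+1) ^ q) ^ 2)
    from funext hrw]
  -- termwise bounds
  have hden : ∀ k : ℕ, (0:ℝ) < (1 + μ * ((k:ℝ)+1) ^ q) ^ 2 := by
    intro k
    have : (0:ℝ) < ((k:ℝ)+1) ^ q := Real.rpow_pos_of_pos (by positivity) q
    nlinarith [mul_pos hμ this]
  have hwb1 : ∀ k : ℕ, (1:ℝ) ≤ ((k:ℝ)+1) ^ b := fun k => Real.one_le_rpow (hwk k) hb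
  set u : ℕ → ℝ := fun k : ℕ => ((k:ℝ)+1) ^ b / (1 + μ * ((k:ℝ)+1) ^ q) ^ 2 with hu_def
  have husum : Summable u := sumU hq hbq hμ
  have hlowk : ∀ k : ℕ, c ^ (-a) * u k ≤
      (1 + c ^ (-a) * ((k:ℝ)+1) ^ b) / (1 + μ * ((k:ℝ)+1) ^ q) ^ 2 := by
    intro k
    rw [hu_def]
    rw [mul_div_assoc']
    apply div_le_div_of_nonneg_right _ (le_of_lt (hden k))
    have := Real.rpow_nonneg (le_of_lt (lt_of_lt_of_le one_pos (hwk k))) b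
    nlinarith
  have hhighk : ∀ k : ℕ, (1 + c ^ (-a) * ((k:ℝ)+1) ^ b) / (1 + μ * ((k:ℝ)+1) ^ q) ^ 2 ≤
      (1 + c ^ (-a)) * u k := by
    intro k
    rw [hu_def]
    rw [mul_div_assoc']
    apply div_le_div_of_nonneg_right _ (le_of_lt (hden k))
    have h1 := hwb1 k
    nlinarith
  have htnn : ∀ k : ℕ, 0 ≤ (1 + c ^ (-a) * ((k:ℝ)+1) ^ b) / (1 + μ * ((k:ℝ)+1) ^ q) ^ 2 := by
    intro k
    apply div_nonneg _ (le_of_lt (hden k))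
    have := hwb1 k
    nlinarith
  have htsum : Summable (fun k : ℕ =>
      (1 + c ^ (-a) * ((k:ℝ)+1) ^ b) / (1 + μ * ((k:ℝ)+1) ^ q) ^ 2) :=
    Summable.of_nonneg_of_le htnn hhighk (husum.mul_left _)
  have hT1 : c ^ (-a) * (∑' k, u k) ≤
      ∑' k : ℕ, (1 + c ^ (-a) * ((k:ℝ)+1) ^ b) / (1 + μ * ((k:ℝ)+1) ^ q) ^ 2 := by
    rw [← tsum_mul_left]
    exact Summable.tsum_le_tsum hlowk (husum.mul_left _) htsum
  have hT2 : (∑' k : ℕ, (1 + c ^ (-a) * ((k:ℝ)+1) ^ b) / (1 + μ * ((k:ℝ)+1) ^ q) ^ 2) ≤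
      (1 + c ^ (-a)) * (∑' k, u k) := by
    rw [← tsum_mul_left]
    exact Summable.tsum_le_tsum hhighk htsum (husum.mul_left _)
  -- μ power vs l power
  have hμpow : μ ^ (-((b+1)/q)) = l ^ (-(a + 1/(2*p))) * c ^ ((b+1)/q) := by
    rw [hμ_def, Real.div_rpow hl.le hc.le, Real.rpow_neg hc.le, he]
    rw [div_eq_mul_inv, inv_inv]
  rw [hμpow] at hlow hhigh
  have hT0 : 0 ≤ ∑' k, u k := tsum_nonneg (fun k => by
    rw [hu_def]
    exact div_nonneg (Real.rpow_nonneg (by positivity) b) (le_of_lt (hden k)))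
  constructor
  · calc c ^ (-a) * A * c ^ ((b+1)/q) * l ^ (-(a + 1/(2*p)))
        = c ^ (-a) * (A * (l ^ (-(a + 1/(2*p))) * c ^ ((b+1)/q))) := by ring
      _ ≤ c ^ (-a) * (∑' k, u k) := mul_le_mul_of_nonneg_left hlow hca.le
      _ ≤ _ := hT1
  · calc (∑' k : ℕ, (1 + c ^ (-a) * ((k:ℝ)+1) ^ b) / (1 + μ * ((k:ℝ)+1) ^ q) ^ 2)
        ≤ (1 + c ^ (-a)) * (∑' k, u k) := hT2
      _ ≤ (1 + c ^ (-a)) * (B * (l ^ (-(a + 1/(2*p))) * c ^ ((b+1)/q))) :=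
          mul_le_mul_of_nonneg_left hhigh (by positivity)
      _ = (1 + c ^ (-a)) * B * c ^ ((b+1)/q) * l ^ (-(a + 1/(2*p))) := by ring
end

section
/- Let (a_k)_{k>=1} be square-summable reals with sum_k gamma_k^{-1} a_k^2 = J < infinity, where gamma_k > 0. For lambda > 0 define b_k = a_k / (1 + lambda gamma_k^{-1}). Then for any 0 <= a < 1, sum_k (1 + gamma_k^{-a})(b_k - a_k)^2 <= lambda^2 * J * sup_{x>0} (1 + x^{-a}) x^{-1} / (1 + lambda x^{-1})^2, and this supremum is at most 1/(4 lambda) + C0 lambda^{-(a+1)} for some constant C0 > 0 depending only on a; hence the left-hand side is O(lambda^{1-a} J) as lambda -> 0. -/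
set_option maxHeartbeats 1000000

lemma aux_bound (α : ℝ) (hα0 : 0 ≤ α) (hα1 : α < 1) {l x : ℝ} (hl : 0 < l) (hx : 0 < x) :
    (1 + x ^ (-α)) * x⁻¹ / (1 + l * x⁻¹) ^ 2 ≤ 1 / (4 * l) + l ^ (-(α + 1)) := by
  have hx' : 0 < x⁻¹ := inv_pos.2 hx
  have ht0 : 0 < l * x⁻¹ := mul_pos hl hx'
  have hden : (0:ℝ) < (1 + l * x⁻¹) ^ 2 := by positivity
  have h1 : x⁻¹ / (1 + l * x⁻¹) ^ 2 ≤ 1 / (4 * l) := by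
    rw [div_le_div_iff₀ hden (by positivity)]
    nlinarith [sq_nonneg (1 - l * x⁻¹)]
  have h2 : x ^ (-α) * x⁻¹ / (1 + l * x⁻¹) ^ 2 ≤ l ^ (-(α + 1)) := by
    have hxa : x ^ (-α) * x⁻¹ = x ^ (-(α + 1)) := by
      rw [← Real.rpow_neg_one x, ← Real.rpow_add hx]
      ring_nf
    have hkey : (l * x⁻¹) ^ (α + 1) ≤ (1 + l * x⁻¹) ^ 2 := by
      rcases le_or_gt (l * x⁻¹) 1 with h | h
      · have h0 : (0:ℝ) ≤ α + 1 := by linarith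
        have := Real.rpow_le_one ht0.le h h0
        nlinarith
      · have h2' : (l * x⁻¹) ^ (α + 1) ≤ (l * x⁻¹) ^ (2:ℝ) :=
          Real.rpow_le_rpow_of_exponent_le h.le (by linarith)
        rw [Real.rpow_two] at h2'
        nlinarith
    have hpos : 0 < (l * x⁻¹) ^ (α + 1) := Real.rpow_pos_of_pos ht0 _
    have hxp : 0 < x ^ (-(α + 1)) := Real.rpow_pos_of_pos hx _
    have heq : x ^ (-(α + 1)) / (l * x⁻¹) ^ (α + 1) = l ^ (-(α + 1)) := by
      rw [Real.mul_rpow hl.le hx'.le, Real.inv_rpow hx.le, Real.rpow_neg hx.le,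
        Real.rpow_neg hl.le]
      have h1 : (0:ℝ) < x ^ (α + 1) := Real.rpow_pos_of_pos hx _
      have h2 : (0:ℝ) < l ^ (α + 1) := Real.rpow_pos_of_pos hl _
      field_simp
    calc x ^ (-α) * x⁻¹ / (1 + l * x⁻¹) ^ 2
        = x ^ (-(α + 1)) / (1 + l * x⁻¹) ^ 2 := by rw [hxa]
      _ ≤ x ^ (-(α + 1)) / (l * x⁻¹) ^ (α + 1) := by gcongr
      _ = l ^ (-(α + 1)) := heq
  calc (1 + x ^ (-α)) * x⁻¹ / (1 + l * x⁻¹) ^ 2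
      = x⁻¹ / (1 + l * x⁻¹) ^ 2 + x ^ (-α) * x⁻¹ / (1 + l * x⁻¹) ^ 2 := by ring
    _ ≤ 1 / (4 * l) + l ^ (-(α + 1)) := add_le_add h1 h2

theorem stmt_11 (a γ : ℕ → ℝ) (hγ : ∀ k, 0 < γ k)
    (hsq : Summable fun k => (a k) ^ 2)
    (J : ℝ) (hJ : HasSum (fun k => (γ k)⁻¹ * (a k) ^ 2) J)
    (α : ℝ) (hα0 : 0 ≤ α) (hα1 : α < 1) :
    (∀ l : ℝ, 0 < l →
      (∑' k, (1 + (γ k) ^ (-α)) * (a k / (1 + l * (γ k)⁻¹) - a k) ^ 2) ≤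
        l ^ 2 * J * sSup {y : ℝ | ∃ x : ℝ, 0 < x ∧
          y = (1 + x ^ (-α)) * x⁻¹ / (1 + l * x⁻¹) ^ 2}) ∧
    (∃ C0 : ℝ, 0 < C0 ∧ ∀ l : ℝ, 0 < l →
      sSup {y : ℝ | ∃ x : ℝ, 0 < x ∧ y = (1 + x ^ (-α)) * x⁻¹ / (1 + l * x⁻¹) ^ 2} ≤
        1 / (4 * l) + C0 * l ^ (-(α + 1))) ∧
    (∃ D l0 : ℝ, 0 < D ∧ 0 < l0 ∧ ∀ l : ℝ, 0 < l → l < l0 →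
      (∑' k, (1 + (γ k) ^ (-α)) * (a k / (1 + l * (γ k)⁻¹) - a k) ^ 2) ≤
        D * l ^ (1 - α) * J) := by
  have hJ0 : 0 ≤ J := hJ.nonneg fun k => by have := hγ k; positivity
  set S : ℝ → Set ℝ := fun l => {y : ℝ | ∃ x : ℝ, 0 < x ∧
      y = (1 + x ^ (-α)) * x⁻¹ / (1 + l * x⁻¹) ^ 2} with hS
  have hub : ∀ l : ℝ, 0 < l → ∀ y ∈ S l, y ≤ 1 / (4 * l) + l ^ (-(α + 1)) := by
    rintro l hl y ⟨x, hx, rfl⟩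
    exact aux_bound α hα0 hα1 hl hx
  have hne : ∀ l : ℝ, 0 < l → (S l).Nonempty := by
    intro l hl
    exact ⟨_, ⟨1, one_pos, rfl⟩⟩
  have hbdd : ∀ l : ℝ, 0 < l → BddAbove (S l) := fun l hl =>
    ⟨_, fun y hy => hub l hl y hy⟩
  have hsSup_ub : ∀ l : ℝ, 0 < l → sSup (S l) ≤ 1 / (4 * l) + l ^ (-(α + 1)) := by
    intro l hl
    exact csSup_le (hne l hl) (hub l hl)
  -- pointwise identity of each term
  have hterm : ∀ (l : ℝ), 0 < l → ∀ k,
      (1 + (γ k) ^ (-α)) * (a k / (1 + l * (γ k)⁻¹) - a k) ^ 2 =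
      ((γ k)⁻¹ * (a k) ^ 2) *
        (l ^ 2 * ((1 + (γ k) ^ (-α)) * (γ k)⁻¹ / (1 + l * (γ k)⁻¹) ^ 2)) := by
    intro l hl k
    have hγk := hγ k
    have hd : (0:ℝ) < 1 + l * (γ k)⁻¹ := by positivity
    field_simp
    ring
  have hg_nonneg : ∀ (l : ℝ), 0 < l → ∀ k,
      0 ≤ (1 + (γ k) ^ (-α)) * (γ k)⁻¹ / (1 + l * (γ k)⁻¹) ^ 2 := by
    intro l hl k
    have hγk := hγ k
    positivity
  have hg_le : ∀ (l : ℝ), 0 < l → ∀ k,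
      (1 + (γ k) ^ (-α)) * (γ k)⁻¹ / (1 + l * (γ k)⁻¹) ^ 2 ≤ sSup (S l) := by
    intro l hl k
    exact le_csSup (hbdd l hl) ⟨γ k, hγ k, rfl⟩
  have hM0 : ∀ (l : ℝ), 0 < l → 0 ≤ sSup (S l) := fun l hl =>
    le_trans (hg_nonneg l hl 0) (hg_le l hl 0)
  -- summability of the series of terms
  have hsum : ∀ (l : ℝ), 0 < l →
      Summable (fun k => (1 + (γ k) ^ (-α)) * (a k / (1 + l * (γ k)⁻¹) - a k) ^ 2) := by
    intro l hl
    refine Summable.of_nonneg_of_le (fun k => ?_) (fun k => ?_)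
      (hJ.summable.mul_right (l ^ 2 * sSup (S l)))
    · have hγk := hγ k
      positivity
    · rw [hterm l hl k]
      have hγk := hγ k
      exact mul_le_mul_of_nonneg_left
        (mul_le_mul_of_nonneg_left (hg_le l hl k) (sq_nonneg l)) (by positivity)
  have hpart1 : ∀ l : ℝ, 0 < l →
      (∑' k, (1 + (γ k) ^ (-α)) * (a k / (1 + l * (γ k)⁻¹) - a k) ^ 2) ≤
        l ^ 2 * J * sSup (S l) := by
    intro l hl
    have hmaj : (∑' k, ((γ k)⁻¹ * (a k) ^ 2) * (l ^ 2 * sSup (S l))) =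
        J * (l ^ 2 * sSup (S l)) := by
      rw [tsum_mul_right, hJ.tsum_eq]
    calc (∑' k, (1 + (γ k) ^ (-α)) * (a k / (1 + l * (γ k)⁻¹) - a k) ^ 2)
        ≤ ∑' k, ((γ k)⁻¹ * (a k) ^ 2) * (l ^ 2 * sSup (S l)) := by
          refine Summable.tsum_le_tsum (fun k => ?_) (hsum l hl) (hJ.summable.mul_right _)
          rw [hterm l hl k]
          have hγk := hγ k
          exact mul_le_mul_of_nonneg_left
            (mul_le_mul_of_nonneg_left (hg_le l hl k) (sq_nonneg l)) (by positivity)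
      _ = l ^ 2 * J * sSup (S l) := by rw [hmaj]; ring
  refine ⟨hpart1, ⟨1, one_pos, fun l hl => by simpa using hsSup_ub l hl⟩,
    ⟨5/4, 1, by norm_num, one_pos, ?_⟩⟩
  intro l hl hl1
  have key : l ^ 2 * (1 / (4 * l) + l ^ (-(α + 1))) ≤ 5 / 4 * l ^ (1 - α) := by
    have h1 : l ^ 2 * (1 / (4 * l)) = l / 4 := by
      field_simp
    have h2 : l ^ 2 * l ^ (-(α + 1)) = l ^ (1 - α) := by
      rw [← Real.rpow_natCast l 2, ← Real.rpow_add hl]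
      congr 1
      push_cast
      ring
    have h3 : l ≤ l ^ (1 - α) := by
      nth_rewrite 1 [← Real.rpow_one l]
      exact Real.rpow_le_rpow_of_exponent_ge hl hl1.le (by linarith)
    calc l ^ 2 * (1 / (4 * l) + l ^ (-(α + 1)))
        = l / 4 + l ^ (1 - α) := by rw [mul_add, h1, h2]
      _ ≤ l ^ (1 - α) / 4 + l ^ (1 - α) := by linarith
      _ = 5 / 4 * l ^ (1 - α) := by ring
  calc (∑' k, (1 + (γ k) ^ (-α)) * (a k / (1 + l * (γ k)⁻¹) - a k) ^ 2)
      ≤ l ^ 2 * J * sSup (S l) := hpart1 l hl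
    _ ≤ l ^ 2 * J * (1 / (4 * l) + l ^ (-(α + 1))) := by
        apply mul_le_mul_of_nonneg_left (hsSup_ub l hl) (by positivity)
    _ = J * (l ^ 2 * (1 / (4 * l) + l ^ (-(α + 1)))) := by ring
    _ ≤ J * (5 / 4 * l ^ (1 - α)) := mul_le_mul_of_nonneg_left key hJ0
    _ = 5 / 4 * l ^ (1 - α) * J := by ring
end

section
/- Let W = Sigma + n*lambda*I where Sigma is a symmetric positive semidefinite n x n real matrix, lambda > 0, and T is an n x 2 real matrix of full column rank. Then the quadratic function F(c,d) = (1/n)||y - (T d + Sigma c)||^2 + lambda c' Sigma c over c in R^n, d in R^2 is minimized at d = (T' W^{-1} T)^{-1} T' W^{-1} y and c = W^{-1} [I - T (T' W^{-1} T)^{-1} T' W^{-1}] y. -/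
open Matrix

lemma dot_symm_aux {m : Type*} [Fintype m] {A : Matrix m m ℝ} (hA : Aᵀ = A)
    (u v : m → ℝ) : u ⬝ᵥ A.mulVec v = v ⬝ᵥ A.mulVec u := by
  rw [dotProduct_mulVec, ← mulVec_transpose, hA, dotProduct_comm]

lemma dot_mulVec_left_aux {m k : Type*} [Fintype m] [Fintype k]
    (T : Matrix m k ℝ) (d : k → ℝ) (w : m → ℝ) :
    (T.mulVec d) ⬝ᵥ w = d ⬝ᵥ (Tᵀ.mulVec w) := by
  rw [dotProduct_comm, dotProduct_mulVec, ← mulVec_transpose, dotProduct_comm]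

lemma quad_min_aux {m : Type*} [Fintype m] {A : Matrix m m ℝ} (hA : A.PosSemidef)
    (b c₀ : m → ℝ) (h : A.mulVec c₀ = b) (c : m → ℝ) :
    c₀ ⬝ᵥ A.mulVec c₀ - 2 * (c₀ ⬝ᵥ b) ≤ c ⬝ᵥ A.mulVec c - 2 * (c ⬝ᵥ b) := by
  have hAT : Aᵀ = A := by
    have := hA.1; rwa [IsHermitian, conjTranspose_eq_transpose_of_trivial] at this
  have h0 : (0:ℝ) ≤ (c - c₀) ⬝ᵥ A.mulVec (c - c₀) := by
    have := hA.dotProduct_mulVec_nonneg (c - c₀); rwa [star_trivial] at this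
  have e1 : c₀ ⬝ᵥ A.mulVec c = c ⬝ᵥ b := by rw [dot_symm_aux hAT, h]
  have e2 : c ⬝ᵥ A.mulVec c₀ = c ⬝ᵥ b := by rw [h]
  have e3 : c₀ ⬝ᵥ A.mulVec c₀ = c₀ ⬝ᵥ b := by rw [h]
  rw [mulVec_sub, sub_dotProduct, dotProduct_sub, dotProduct_sub] at h0
  rw [e1, e2, e3] at h0
  linarith

lemma psd_smul_aux {m : Type*} [Fintype m] {A : Matrix m m ℝ} (hA : A.PosSemidef)
    {a : ℝ} (ha : 0 ≤ a) : (a • A).PosSemidef := by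
  refine Matrix.PosSemidef.of_dotProduct_mulVec_nonneg ?_ (fun x => ?_)
  · simp only [IsHermitian, conjTranspose_smul, star_trivial]; rw [hA.1]
  · rw [smul_mulVec, dotProduct_smul]
    exact smul_nonneg ha (hA.dotProduct_mulVec_nonneg x)

lemma pd_smul_one_aux {m : Type*} [Fintype m] [DecidableEq m] {a : ℝ} (ha : 0 < a) :
    (a • (1 : Matrix m m ℝ)).PosDef := by
  refine Matrix.PosDef.of_dotProduct_mulVec_pos ?_ (fun x hx => ?_)
  · simp [IsHermitian, conjTranspose_smul]
  · rw [smul_mulVec, one_mulVec, dotProduct_smul, star_trivial]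
    have hx2 : 0 < x ⬝ᵥ x := by
      have := dotProduct_star_self_pos_iff (v := x)
      simp only [star_trivial] at this
      exact this.mpr hx
    exact smul_pos ha hx2

theorem stmt_19 (n : ℕ) (Sg : Matrix (Fin n) (Fin n) ℝ) (hSg : Sg.PosSemidef)
    (l : ℝ) (hl : 0 < l)
    (T : Matrix (Fin n) (Fin 2) ℝ) (hT : T.rank = 2)
    (y : Fin n → ℝ) :
    let W : Matrix (Fin n) (Fin n) ℝ := Sg + ((n : ℝ) * l) • 1
    let F : (Fin n → ℝ) → (Fin 2 → ℝ) → ℝ := fun c d =>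
      (1 / (n : ℝ)) * (∑ i, (y i - (T.mulVec d + Sg.mulVec c) i) ^ 2) +
        l * (c ⬝ᵥ Sg.mulVec c)
    let dstar : Fin 2 → ℝ := ((Tᵀ * W⁻¹ * T)⁻¹ * Tᵀ * W⁻¹).mulVec y
    let cstar : Fin n → ℝ := (W⁻¹ * (1 - T * (Tᵀ * W⁻¹ * T)⁻¹ * Tᵀ * W⁻¹)).mulVec y
    ∀ (c : Fin n → ℝ) (d : Fin 2 → ℝ), F cstar dstar ≤ F c d := by
  intro W F dstar cstar c d
  -- basic facts
  have hn2 : 2 ≤ n := by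
    have := T.rank_le_card_height
    simp only [hT, Fintype.card_fin] at this; omega
  have hn0 : (0:ℝ) < (n:ℝ) := by exact_mod_cast Nat.lt_of_lt_of_le Nat.zero_lt_two hn2
  have hnl : (0:ℝ) < (n:ℝ) * l := mul_pos hn0 hl
  have hSgT : Sgᵀ = Sg := by
    have := hSg.1; rwa [IsHermitian, conjTranspose_eq_transpose_of_trivial] at this
  have hW : W.PosDef := Matrix.PosDef.posSemidef_add hSg (pd_smul_one_aux hnl)
  have hWdet : IsUnit W.det := (Matrix.isUnit_iff_isUnit_det W).mp hW.isUnit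
  have hWW : W * W⁻¹ = 1 := mul_nonsing_inv W hWdet
  have hWinv : W⁻¹.PosDef := hW.inv
  have hWinvT : (W⁻¹)ᵀ = W⁻¹ := by
    have := hWinv.1
    rwa [IsHermitian, conjTranspose_eq_transpose_of_trivial] at this
  -- injectivity of T
  have hTinj : ∀ x : Fin 2 → ℝ, T.mulVec x = 0 → x = 0 := by
    intro x hx
    have hker : LinearMap.ker T.mulVecLin = ⊥ := by
      have hrn := LinearMap.finrank_range_add_finrank_ker T.mulVecLin
      rw [show Module.finrank ℝ (LinearMap.range T.mulVecLin) = T.rank from rfl, hT] at hrn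
      simp only [Module.finrank_fintype_fun_eq_card, Fintype.card_fin] at hrn
      have : Module.finrank ℝ (LinearMap.ker T.mulVecLin) = 0 := by omega
      exact Submodule.finrank_eq_zero.mp this
    have hmem : x ∈ LinearMap.ker T.mulVecLin := by simpa [LinearMap.mem_ker]
    rw [hker] at hmem; simpa using hmem
  -- M := Tᵀ * W⁻¹ * T is positive definite
  set M : Matrix (Fin 2) (Fin 2) ℝ := Tᵀ * W⁻¹ * T with hMdef
  have hM : M.PosDef := by
    refine Matrix.PosDef.of_dotProduct_mulVec_pos ?_ (fun x hx => ?_)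
    · have hMT : Mᵀ = M := by
        rw [hMdef, transpose_mul, transpose_mul, transpose_transpose, hWinvT]
        exact (Matrix.mul_assoc _ _ _).symm
      rw [IsHermitian, conjTranspose_eq_transpose_of_trivial, hMT]
    · rw [star_trivial, hMdef, ← mulVec_mulVec, ← mulVec_mulVec,
        dotProduct_mulVec (v := x), ← mulVec_transpose, transpose_transpose]
      have hTx : T.mulVec x ≠ 0 := fun h => hx (hTinj x h)
      have := hWinv.dotProduct_mulVec_pos (x := T.mulVec x) (by simpa [star_trivial] using hTx)
      rwa [star_trivial] at this
  have hMdet : IsUnit M.det := (Matrix.isUnit_iff_isUnit_det M).mp hM.isUnit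
  have hMM : M * M⁻¹ = 1 := mul_nonsing_inv M hMdet
  -- residual
  set r : (Fin 2 → ℝ) → (Fin n → ℝ) := fun d => y - T.mulVec d with hrdef
  -- the quadratic-in-c matrix
  set A : Matrix (Fin n) (Fin n) ℝ := Sg * W with hAdef
  have hAeq : A = Sg * Sg + ((n:ℝ) * l) • Sg := by
    rw [hAdef, show W = Sg + ((n:ℝ)*l) • 1 from rfl, mul_add, Matrix.mul_smul, mul_one]
  have hApsd : A.PosSemidef := by
    rw [hAeq]
    have h1 : (Sg * Sg).PosSemidef := by
      have := Matrix.posSemidef_conjTranspose_mul_self Sg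
      rwa [hSg.1] at this
    exact h1.add (psd_smul_aux hSg hnl.le)
  have hF : ∀ (c' : Fin n → ℝ) (d' : Fin 2 → ℝ), F c' d' = (1 / (n:ℝ)) *
      ((c' ⬝ᵥ A.mulVec c') - 2 * (c' ⬝ᵥ Sg.mulVec (r d')) + (r d' ⬝ᵥ r d')) := by
    intro c' d'
    have hsum : ∑ i, (y i - (T.mulVec d' + Sg.mulVec c') i) ^ 2
        = (r d' - Sg.mulVec c') ⬝ᵥ (r d' - Sg.mulVec c') := by
      simp only [dotProduct]
      apply Finset.sum_congr rfl
      intro i _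
      simp only [hrdef, Pi.sub_apply, Pi.add_apply]
      ring
    have hexp : ∀ u : Fin n → ℝ, (u - Sg.mulVec c') ⬝ᵥ (u - Sg.mulVec c')
        = (u ⬝ᵥ u) - 2 * (c' ⬝ᵥ Sg.mulVec u) + (c' ⬝ᵥ (Sg * Sg).mulVec c') := by
      intro u
      have e1 : u ⬝ᵥ Sg.mulVec c' = c' ⬝ᵥ Sg.mulVec u := dot_symm_aux hSgT _ _
      have e2 : (Sg.mulVec c') ⬝ᵥ u = c' ⬝ᵥ Sg.mulVec u := by
        rw [dotProduct_comm]; exact e1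
      have e3 : (Sg.mulVec c') ⬝ᵥ (Sg.mulVec c') = c' ⬝ᵥ (Sg * Sg).mulVec c' := by
        rw [dot_symm_aux hSgT (Sg.mulVec c') c', mulVec_mulVec]
      rw [sub_dotProduct, dotProduct_sub, dotProduct_sub, e1, e2, e3]
      ring
    have hA2 : c' ⬝ᵥ A.mulVec c'
        = c' ⬝ᵥ (Sg * Sg).mulVec c' + ((n:ℝ)*l) * (c' ⬝ᵥ Sg.mulVec c') := by
      rw [hAeq, add_mulVec, dotProduct_add, smul_mulVec, dotProduct_smul, smul_eq_mul]
    show (1 / (n : ℝ)) * (∑ i, (y i - (T.mulVec d' + Sg.mulVec c') i) ^ 2)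
        + l * (c' ⬝ᵥ Sg.mulVec c') = _
    rw [hsum, hexp (r d'), hA2]
    field_simp
    ring
  -- minimization over c
  have hmulc : ∀ d', A.mulVec (W⁻¹.mulVec (r d')) = Sg.mulVec (r d') := by
    intro d'
    rw [mulVec_mulVec, hAdef, Matrix.mul_assoc, hWW, mul_one]
  have hstep1 : ∀ (c' : Fin n → ℝ) (d' : Fin 2 → ℝ),
      F (W⁻¹.mulVec (r d')) d' ≤ F c' d' := by
    intro c' d'
    rw [hF, hF]
    have hq := quad_min_aux hApsd (Sg.mulVec (r d')) (W⁻¹.mulVec (r d')) (hmulc d') c'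
    have hpos : (0:ℝ) ≤ 1 / (n:ℝ) := by positivity
    apply mul_le_mul_of_nonneg_left _ hpos
    linarith
  -- value at the optimal c
  have hval : ∀ d', F (W⁻¹.mulVec (r d')) d' = l * (r d' ⬝ᵥ W⁻¹.mulVec (r d')) := by
    intro d'
    rw [hF]
    have e0 : (W⁻¹.mulVec (r d')) ⬝ᵥ A.mulVec (W⁻¹.mulVec (r d'))
        = (W⁻¹.mulVec (r d')) ⬝ᵥ Sg.mulVec (r d') := by rw [hmulc d']
    have e1 : (W⁻¹.mulVec (r d')) ⬝ᵥ Sg.mulVec (r d')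
        = r d' ⬝ᵥ (Sg * W⁻¹).mulVec (r d') := by
      rw [dot_symm_aux hSgT (W⁻¹.mulVec (r d')) (r d'), mulVec_mulVec]
    have e2 : r d' ⬝ᵥ r d' - r d' ⬝ᵥ (Sg * W⁻¹).mulVec (r d')
        = ((n:ℝ)*l) * (r d' ⬝ᵥ W⁻¹.mulVec (r d')) := by
      have h2 : Sg * W⁻¹ + ((n:ℝ)*l) • W⁻¹ = 1 := by
        rw [← hWW, show W = Sg + ((n:ℝ)*l) • 1 from rfl, add_mul, Matrix.smul_mul, one_mul]
      have h1 : (1 : Matrix (Fin n) (Fin n) ℝ) - Sg * W⁻¹ = ((n:ℝ)*l) • W⁻¹ := by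
        rw [← h2]; abel
      have h3 : r d' ⬝ᵥ r d' = r d' ⬝ᵥ ((1 : Matrix (Fin n) (Fin n) ℝ).mulVec (r d')) := by
        rw [one_mulVec]
      rw [h3, ← dotProduct_sub, ← sub_mulVec, h1, smul_mulVec, dotProduct_smul,
        smul_eq_mul]
    have key : (W⁻¹.mulVec (r d')) ⬝ᵥ A.mulVec (W⁻¹.mulVec (r d'))
        - 2 * ((W⁻¹.mulVec (r d')) ⬝ᵥ Sg.mulVec (r d')) + (r d' ⬝ᵥ r d')
        = ((n:ℝ)*l) * (r d' ⬝ᵥ W⁻¹.mulVec (r d')) := by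
      rw [e0, e1]; linarith
    rw [key]
    field_simp
  -- expansion of the quadratic in d
  have hG : ∀ d', r d' ⬝ᵥ W⁻¹.mulVec (r d')
      = d' ⬝ᵥ M.mulVec d' - 2 * (d' ⬝ᵥ (Tᵀ * W⁻¹).mulVec y) + y ⬝ᵥ W⁻¹.mulVec y := by
    intro d'
    have e1 : y ⬝ᵥ W⁻¹.mulVec (T.mulVec d') = d' ⬝ᵥ (Tᵀ * W⁻¹).mulVec y := by
      rw [dot_symm_aux hWinvT y (T.mulVec d'), dot_mulVec_left_aux, mulVec_mulVec]
    have e2 : (T.mulVec d') ⬝ᵥ W⁻¹.mulVec y = d' ⬝ᵥ (Tᵀ * W⁻¹).mulVec y := by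
      rw [dot_mulVec_left_aux, mulVec_mulVec]
    have e3 : (T.mulVec d') ⬝ᵥ W⁻¹.mulVec (T.mulVec d') = d' ⬝ᵥ M.mulVec d' := by
      rw [dot_mulVec_left_aux, mulVec_mulVec, mulVec_mulVec, ← hMdef]
    show (y - T.mulVec d') ⬝ᵥ W⁻¹.mulVec (y - T.mulVec d') = _
    rw [mulVec_sub, dotProduct_sub, sub_dotProduct, sub_dotProduct, e1, e2, e3]
    ring
  -- the optimal d
  have hmuld : M.mulVec dstar = (Tᵀ * W⁻¹).mulVec y := by
    show M.mulVec (((Tᵀ * W⁻¹ * T)⁻¹ * Tᵀ * W⁻¹).mulVec y) = _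
    rw [← hMdef, mulVec_mulVec, ← Matrix.mul_assoc, ← Matrix.mul_assoc, hMM, Matrix.one_mul]
  have hstep2 : r dstar ⬝ᵥ W⁻¹.mulVec (r dstar) ≤ r d ⬝ᵥ W⁻¹.mulVec (r d) := by
    rw [hG, hG]
    have hq := quad_min_aux hM.posSemidef ((Tᵀ * W⁻¹).mulVec y) dstar hmuld d
    linarith
  -- identification of cstar
  have hcstar : cstar = W⁻¹.mulVec (r dstar) := by
    show (W⁻¹ * (1 - T * (Tᵀ * W⁻¹ * T)⁻¹ * Tᵀ * W⁻¹)).mulVec y = _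
    rw [← hMdef, ← mulVec_mulVec, sub_mulVec, one_mulVec]
    show W⁻¹.mulVec (y - (T * M⁻¹ * Tᵀ * W⁻¹).mulVec y)
        = W⁻¹.mulVec (y - T.mulVec (((Tᵀ * W⁻¹ * T)⁻¹ * Tᵀ * W⁻¹).mulVec y))
    rw [← hMdef, mulVec_mulVec]
    simp only [Matrix.mul_assoc]
  calc F cstar dstar = F (W⁻¹.mulVec (r dstar)) dstar := by rw [hcstar]
    _ = l * (r dstar ⬝ᵥ W⁻¹.mulVec (r dstar)) := hval dstar
    _ ≤ l * (r d ⬝ᵥ W⁻¹.mulVec (r d)) := mul_le_mul_of_nonneg_left hstep2 hl.le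
    _ = F (W⁻¹.mulVec (r d)) d := (hval d).symm
    _ ≤ F c d := hstep1 c d
end
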